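/- Kreweras' model admits the rational invariant pair (I₁, I₂): for every field k and all t, x, y ∈ k with x ≠ 0, y ≠ 0, if K(x,y) = t(x²y² + x + y) − xy = 0, then I₁(x) = I₂(y), where I₁(x) = t/x² − 1/x − tx and I₂(y) = t/y² − 1/y − ty. -/

import Mathlib

/-- Kreweras' model admits the rational invariant pair
`I₁(x) = t/x² - 1/x - tx` and `I₂(y) = t/y² - 1/y - ty`:
they agree at every point of the kernel curve `K(x,y) = 0`. -/
theorem kreweras_invariants {k : Type*} [Field k] (t x y : k)
    (hx : x ≠ 0) (hy : y ≠ 0)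
    (hK : t * (x ^ 2 * y ^ 2 + x + y) - x * y = 0) :
    t / x ^ 2 - 1 / x - t * x = t / y ^ 2 - 1 / y - t * y := by
  field_simp
  linear_combination (y - x) * hK
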